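/- Let G be a linearly ordered additive commutative group, ℤ ×ₗ G the lexicographic product, and u = (1, 0). Write D(y) = (((y + y − u) ⊔ 0) + ((y + y − u) ⊔ 0)) ⊓ u, i.e., D(y) = 2(y²). If 0 ≤ x, y ≤ u satisfy D(x) ≤ x and D(y) ≤ y, then the elements x ⊕ y = (x + y) ⊓ u, x ⊙ y = (x + y − u) ⊔ 0, x ⊓ y, and x ⊔ y all satisfy the same inequality (D(z) ≤ z). That is, θ(Δ(G)) is closed under ⊕, ⊙, ∧, ∨. -/

import Mathlib

section Aux
variable {G : Type*} [AddCommGroup G] [LinearOrder G] [IsOrderedAddMonoid G]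

private lemma lex_le_of_fst_lt {p q : ℤ × G} (h : p.1 < q.1) : toLex p ≤ toLex q :=
  Prod.Lex.le_iff.2 (Or.inl h)

private lemma fst_le_of_lex_le {p q : ℤ × G} (h : toLex p ≤ toLex q) : p.1 ≤ q.1 := by
  have h' : p.1 < q.1 ∨ p.1 = q.1 ∧ p.2 ≤ q.2 := Prod.Lex.le_iff.1 h
  rcases h' with h1 | ⟨h1, _⟩ <;> omega

/-- If the first coordinate of `z` is `≤ 0` and `0 ≤ z`, then `D z = 0 ≤ z`. -/
private lemma aux_low (D : ℤ ×ₗ G → ℤ ×ₗ G)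
    (hD : ∀ y, D y = (((y + y - toLex (1, 0)) ⊔ 0) + ((y + y - toLex (1, 0)) ⊔ 0)) ⊓ toLex (1, 0))
    (z : ℤ ×ₗ G) (hz0 : 0 ≤ z) (hz1 : (ofLex z).1 ≤ 0) : D z ≤ z := by
  have hneg : z + z - toLex (1, 0) ≤ 0 :=
    lex_le_of_fst_lt (p := ofLex z + ofLex z - (1, 0)) (q := ((0 : ℤ), (0 : G)))
      (by simp only [Prod.fst_sub, Prod.fst_add]; omega)
  have h0u : (0 : ℤ ×ₗ G) ≤ toLex (1, 0) :=
    lex_le_of_fst_lt (p := ((0 : ℤ), (0 : G))) (by norm_num)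
  rw [hD, sup_eq_right.2 hneg, add_zero, inf_eq_left.2 h0u]
  exact hz0

private lemma aux_Du (D : ℤ ×ₗ G → ℤ ×ₗ G)
    (hD : ∀ y, D y = (((y + y - toLex (1, 0)) ⊔ 0) + ((y + y - toLex (1, 0)) ⊔ 0)) ⊓ toLex (1, 0)) :
    D (toLex (1, 0)) ≤ toLex ((1 : ℤ), (0 : G)) := by
  rw [hD]
  exact inf_le_right

/-- If `0 ≤ z ≤ u`, `D z ≤ z` and the first coordinate of `z` is positive, then `z = u`. -/
private lemma aux_high (D : ℤ ×ₗ G → ℤ ×ₗ G)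
    (hD : ∀ y, D y = (((y + y - toLex (1, 0)) ⊔ 0) + ((y + y - toLex (1, 0)) ⊔ 0)) ⊓ toLex (1, 0))
    (z : ℤ ×ₗ G) (hzu : z ≤ toLex (1, 0)) (hz : D z ≤ z) (hz1 : 0 < (ofLex z).1) :
    z = toLex (1, 0) := by
  have h1 : (ofLex z).1 ≤ 1 := fst_le_of_lex_le (p := ofLex z) (q := (1, 0)) hzu
  have hpos : (0 : ℤ ×ₗ G) ≤ z + z - toLex (1, 0) :=
    lex_le_of_fst_lt (p := ((0 : ℤ), (0 : G))) (q := ofLex z + ofLex z - (1, 0))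
      (by simp only [Prod.fst_sub, Prod.fst_add]; omega)
  have hbig : toLex ((1 : ℤ), (0 : G)) ≤
      (z + z - toLex (1, 0)) + (z + z - toLex (1, 0)) :=
    lex_le_of_fst_lt (p := ((1 : ℤ), (0 : G)))
      (q := (ofLex z + ofLex z - (1, 0)) + (ofLex z + ofLex z - (1, 0)))
      (by simp only [Prod.fst_sub, Prod.fst_add]; omega)
  rw [hD, sup_eq_left.2 hpos, inf_eq_right.2 hbig] at hz
  exact le_antisymm hzu hz

end Aux

/-- In `Δ(G) = Γ(ℤ ×ₗ G, (1,0)) ∈ V(C)`, writing `D(y) = 2(y²)`, the set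
`θ(Δ(G)) = {x : D(x) ≤ x}` is closed under `⊕`, `⊙`, `∧`, `∨`. -/
theorem stmt_14 {G : Type*} [AddCommGroup G] [LinearOrder G] [IsOrderedAddMonoid G]
    (u : ℤ ×ₗ G) (hu : u = toLex (1, 0))
    (D : ℤ ×ₗ G → ℤ ×ₗ G)
    (hD : ∀ y, D y = (((y + y - u) ⊔ 0) + ((y + y - u) ⊔ 0)) ⊓ u)
    (x y : ℤ ×ₗ G) (hx0 : 0 ≤ x) (hxu : x ≤ u) (hy0 : 0 ≤ y) (hyu : y ≤ u)
    (hx : D x ≤ x) (hy : D y ≤ y) :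
    D ((x + y) ⊓ u) ≤ (x + y) ⊓ u ∧
    D ((x + y - u) ⊔ 0) ≤ (x + y - u) ⊔ 0 ∧
    D (x ⊓ y) ≤ x ⊓ y ∧
    D (x ⊔ y) ≤ x ⊔ y := by
  subst hu
  rcases le_or_gt ((ofLex x).1) 0 with hxa | hxa
  · rcases le_or_gt ((ofLex y).1) 0 with hya | hya
    · -- both infinitesimal
      have hxy0 : (0 : ℤ ×ₗ G) ≤ x + y := add_nonneg hx0 hy0
      have hltu : x + y ≤ toLex (1, 0) := by
        have : toLex (ofLex x + ofLex y) ≤ toLex ((1 : ℤ), (0 : G)) :=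
          lex_le_of_fst_lt (by simp only [Prod.fst_add]; omega)
        exact this
      have h1 : (x + y) ⊓ toLex (1, 0) = x + y := inf_eq_left.2 hltu
      have h2 : (x + y - toLex (1, 0)) ⊔ 0 = 0 := by
        refine sup_eq_right.2 ?_
        have : toLex (ofLex x + ofLex y - (1, 0)) ≤ toLex ((0 : ℤ), (0 : G)) :=
          lex_le_of_fst_lt (by simp only [Prod.fst_sub, Prod.fst_add]; omega)
        exact this
      refine ⟨?_, ?_, ?_, ?_⟩
      · rw [h1]
        exact aux_low D hD _ hxy0 (by simpa using by omega)
      · rw [h2]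
        exact aux_low D hD 0 le_rfl (by norm_num)
      · rcases le_total x y with h | h
        · rw [inf_eq_left.2 h]; exact aux_low D hD x hx0 hxa
        · rw [inf_eq_right.2 h]; exact aux_low D hD y hy0 hya
      · rcases le_total x y with h | h
        · rw [sup_eq_right.2 h]; exact aux_low D hD y hy0 hya
        · rw [sup_eq_left.2 h]; exact aux_low D hD x hx0 hxa
    · -- y = u
      have hyeq : y = toLex (1, 0) := aux_high D hD y hyu hy hya
      subst hyeq
      have h1 : (x + toLex (1, 0)) ⊓ toLex ((1 : ℤ), (0 : G)) = toLex (1, 0) :=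
        inf_eq_right.2 (le_add_of_nonneg_left hx0)
      have h2 : (x + toLex (1, 0) - toLex ((1 : ℤ), (0 : G))) ⊔ 0 = x := by
        rw [add_sub_cancel_right]; exact sup_eq_left.2 hx0
      refine ⟨?_, ?_, ?_, ?_⟩
      · rw [h1]; exact aux_Du D hD
      · rw [h2]; exact hx
      · rw [inf_eq_left.2 hxu]; exact hx
      · rw [sup_eq_right.2 hxu]; exact aux_Du D hD
  · -- x = u
    have hxeq : x = toLex (1, 0) := aux_high D hD x hxu hx hxa
    subst hxeq
    have h1 : (toLex ((1 : ℤ), (0 : G)) + y) ⊓ toLex ((1 : ℤ), (0 : G)) = toLex (1, 0) :=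
      inf_eq_right.2 (le_add_of_nonneg_right hy0)
    have h2 : (toLex ((1 : ℤ), (0 : G)) + y - toLex ((1 : ℤ), (0 : G))) ⊔ 0 = y := by
      rw [add_sub_cancel_left]; exact sup_eq_left.2 hy0
    refine ⟨?_, ?_, ?_, ?_⟩
    · rw [h1]; exact aux_Du D hD
    · rw [h2]; exact hy
    · rw [inf_eq_right.2 hyu]; exact hy
    · rw [sup_eq_left.2 hyu]; exact aux_Du D hD
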